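/- Let 1 < p < ∞ and let X be a real Banach space. If the harmonic Hardy space h^p(Δ; X) of X-valued harmonic functions on the open unit disk has the Kadec–Klee property with respect to the topology β of uniform norm convergence on compact subsets of Δ, then X is midpoint locally uniformly convex. Specifically, if X is not midpoint locally uniformly convex, there exist ε > 0, a unit vector x, and vectors x_n with ‖x_n‖ ≥ ε such that the functions f_n(z) = x + (z^n + z̄^n)x_n/2 satisfy: f_n → f ≡ x in β, ‖f_n‖_p → ‖f‖_p = 1, but ‖f_n − f‖_p^p ≥ (ε^p/2π)∫_0^{2π}|cos θ|^p dθ > 0. -/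

import Mathlib

open MeasureTheory Filter Topology

/-- The radial `p`-mean `((1/2π) ∫_0^{2π} ‖f(re^{iθ})‖^p dθ)^{1/p}`. -/
noncomputable def hpRadial {X : Type*} [NormedAddCommGroup X] (p : ℝ)
    (f : ℂ → X) (r : ℝ) : ℝ :=
  ((2 * Real.pi)⁻¹ *
    ∫ θ in (0 : ℝ)..(2 * Real.pi),
      ‖f ((r : ℂ) * Complex.exp ((θ : ℂ) * Complex.I))‖ ^ p) ^ (1 / p)

/-- The `h^p` norm: `sup_{0 ≤ r < 1}` of the radial `p`-means. -/
noncomputable def hpNorm {X : Type*} [NormedAddCommGroup X] (p : ℝ)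
    (f : ℂ → X) : ℝ :=
  ⨆ r : Set.Ico (0 : ℝ) 1, hpRadial p f (r : ℝ)

/-- `f` is harmonic on the open unit disk `Δ`, characterized by continuity
together with the mean value property. -/
def HarmonicOnDisk {X : Type*} [NormedAddCommGroup X] [NormedSpace ℝ X]
    (f : ℂ → X) : Prop :=
  ContinuousOn f (Metric.ball 0 1) ∧
    ∀ z ∈ Metric.ball (0 : ℂ) 1, ∀ ρ : ℝ, 0 < ρ →
      Metric.closedBall z ρ ⊆ Metric.ball 0 1 →
      f z = (2 * Real.pi)⁻¹ •
        ∫ θ in (0 : ℝ)..(2 * Real.pi), f (z + (ρ : ℂ) * Complex.exp ((θ : ℂ) * Complex.I))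

/-- Membership in the harmonic Hardy space `h^p(Δ; X)`. -/
def MemHp {X : Type*} [NormedAddCommGroup X] [NormedSpace ℝ X] (p : ℝ)
    (f : ℂ → X) : Prop :=
  HarmonicOnDisk f ∧
    BddAbove (Set.range fun r : Set.Ico (0 : ℝ) 1 => hpRadial p f (r : ℝ))

/-! ### Auxiliary lemmas -/

instance : Nonempty (Set.Ico (0:ℝ) 1) := ⟨⟨0, by norm_num⟩⟩

section Aux

lemma circle_mean_pow (z : ℂ) {ρ : ℝ} (hρ : 0 < ρ) (m : ℕ) :
    ∫ θ in (0:ℝ)..(2*Real.pi), (z + (ρ:ℂ) * Complex.exp ((θ:ℂ)*Complex.I))^m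
      = ((2*Real.pi : ℝ) : ℂ) * z^m := by
  have hd : DiffContOnCl ℂ (fun w : ℂ => w ^ m) (Metric.ball z ρ) :=
    (differentiable_pow m).diffContOnCl
  have hz : z ∈ Metric.ball z ρ := Metric.mem_ball_self hρ
  have h := hd.circleIntegral_sub_inv_smul hz
  rw [circleIntegral] at h
  have key : ∀ θ : ℝ, deriv (circleMap z ρ) θ • ((circleMap z ρ θ - z)⁻¹ • (circleMap z ρ θ)^m)
      = Complex.I * (circleMap z ρ θ)^m := by
    intro θ
    rw [deriv_circleMap, smul_eq_mul, smul_eq_mul, circleMap_sub_center]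
    have h0 : circleMap 0 ρ θ ≠ 0 := circleMap_ne_center (ne_of_gt hρ)
    field_simp
  simp only [key] at h
  rw [intervalIntegral.integral_const_mul, smul_eq_mul] at h
  have h2 : Complex.I * ∫ θ in (0:ℝ)..(2*Real.pi), (circleMap z ρ θ)^m
      = Complex.I * (((2*Real.pi:ℝ):ℂ) * z^m) := by
    rw [h]; push_cast; ring
  have h3 := mul_left_cancel₀ Complex.I_ne_zero h2
  convert h3 using 2 with θ
  simp [circleMap]

lemma re_pow_circle (r θ : ℝ) (m : ℕ) :
    (((r:ℂ) * Complex.exp ((θ:ℂ)*Complex.I))^m).re = r^m * Real.cos (m*θ) := by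
  rw [mul_pow, ← Complex.exp_nat_mul]
  have h1 : ((m:ℂ) * ((θ:ℂ) * Complex.I)) = ((m*θ : ℝ):ℂ) * Complex.I := by push_cast; ring
  rw [h1]
  have h2 : ((r:ℂ)^m) = ((r^m : ℝ) : ℂ) := by push_cast; ring
  rw [h2, Complex.re_ofReal_mul, Complex.exp_ofReal_mul_I_re]

lemma integral_cos_sq_mul {m : ℕ} (hm : 1 ≤ m) :
    ∫ θ in (0:ℝ)..(2*Real.pi), Real.cos (m*θ)^2 = Real.pi := by
  have hm0 : (m:ℝ) ≠ 0 := by positivity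
  rw [intervalIntegral.integral_comp_mul_left (fun u => Real.cos u ^ 2) hm0]
  rw [integral_cos_sq]
  have h1 : Real.cos ((m:ℝ) * (2*Real.pi)) = 1 := by
    have : (m:ℝ) * (2*Real.pi) = (m:ℕ) * (2*Real.pi) := by norm_num
    rw [this, Real.cos_nat_mul_two_pi]
  have h2 : Real.sin ((m:ℝ) * (2*Real.pi)) = 0 := by
    have : (m:ℝ) * (2*Real.pi) = (2*m : ℕ) * Real.pi := by push_cast; ring
    rw [this, Real.sin_nat_mul_pi]
  rw [h1, h2]
  simp
  field_simp

variable {X : Type*} [NormedAddCommGroup X] [NormedSpace ℝ X] [CompleteSpace X]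
set_option linter.unusedSectionVars false

lemma cont_circle (r : ℝ) : Continuous (fun θ : ℝ => (r:ℂ) * Complex.exp ((θ:ℂ)*Complex.I)) :=
  continuous_const.mul ((Complex.continuous_ofReal.mul continuous_const).cexp)

lemma norm_cont {f : ℂ → X} (hf : Continuous f) (r p : ℝ) (hp : 0 ≤ p) :
    Continuous (fun θ : ℝ => ‖f ((r:ℂ) * Complex.exp ((θ:ℂ)*Complex.I))‖ ^ p) :=
  Continuous.rpow_const ((hf.comp (cont_circle r)).norm) (fun _ => Or.inr hp)

lemma rpow_rpow_inv {M p : ℝ} (hM : 0 ≤ M) (hp : 0 < p) : (M ^ p) ^ (1/p) = M := by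
  rw [← Real.rpow_mul hM, mul_one_div, div_self hp.ne', Real.rpow_one]

lemma hpRadial_le {f : ℂ → X} (hf : Continuous f) {p M : ℝ} (r : ℝ) (hp : 0 < p) (hM : 0 ≤ M)
    (h : ∀ θ : ℝ, ‖f ((r:ℂ) * Complex.exp ((θ:ℂ)*Complex.I))‖ ≤ M) :
    hpRadial p f r ≤ M := by
  have hpi : (0:ℝ) < 2 * Real.pi := by positivity
  have hint : (∫ θ in (0:ℝ)..(2*Real.pi), ‖f ((r:ℂ) * Complex.exp ((θ:ℂ)*Complex.I))‖ ^ p)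
      ≤ ∫ _ in (0:ℝ)..(2*Real.pi), M ^ p := by
    apply intervalIntegral.integral_mono_on hpi.le
      ((norm_cont hf r p hp.le).intervalIntegrable _ _) intervalIntegrable_const
    intro θ _
    exact Real.rpow_le_rpow (norm_nonneg _) (h θ) hp.le
  rw [intervalIntegral.integral_const, sub_zero, smul_eq_mul] at hint
  have h2 : (2 * Real.pi)⁻¹ *
      (∫ θ in (0:ℝ)..(2*Real.pi), ‖f ((r:ℂ) * Complex.exp ((θ:ℂ)*Complex.I))‖ ^ p) ≤ M ^ p := by
    calc (2 * Real.pi)⁻¹ * _ ≤ (2 * Real.pi)⁻¹ * (2 * Real.pi * M ^ p) := by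
          apply mul_le_mul_of_nonneg_left hint (by positivity)
      _ = M ^ p := by field_simp
  calc hpRadial p f r ≤ (M ^ p) ^ (1/p) := by
        apply Real.rpow_le_rpow _ h2 (by positivity)
        apply mul_nonneg (by positivity)
        apply intervalIntegral.integral_nonneg hpi.le
        intro θ _; positivity
    _ = M := rpow_rpow_inv hM hp

lemma hpRadial_const (x : X) {p : ℝ} (hp : 0 < p) (r : ℝ) :
    hpRadial p (fun _ => x) r = ‖x‖ := by
  unfold hpRadial
  rw [intervalIntegral.integral_const, sub_zero, smul_eq_mul, ← mul_assoc,
    inv_mul_cancel₀ (by positivity : (2*Real.pi:ℝ) ≠ 0), one_mul,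
    rpow_rpow_inv (norm_nonneg x) hp]

lemma hpRadial_zero (f : ℂ → X) {p : ℝ} (hp : 0 < p) :
    hpRadial p f 0 = ‖f 0‖ := by
  unfold hpRadial
  have h : ∀ θ : ℝ, f (((0:ℝ):ℂ) * Complex.exp ((θ:ℂ)*Complex.I)) = f 0 := by
    intro θ; norm_num
  simp only [h]
  rw [intervalIntegral.integral_const, sub_zero, smul_eq_mul, ← mul_assoc,
    inv_mul_cancel₀ (by positivity : (2*Real.pi:ℝ) ≠ 0), one_mul,
    rpow_rpow_inv (norm_nonneg _) hp]

lemma hpRadial_smul (f : ℂ → X) {p a : ℝ} (hp : 0 < p) (ha : 0 ≤ a) (r : ℝ) :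
    hpRadial p (fun z => a • f z) r = a * hpRadial p f r := by
  unfold hpRadial
  have h1 : ∀ θ : ℝ, ‖a • f ((r:ℂ) * Complex.exp ((θ:ℂ)*Complex.I))‖ ^ p
      = a ^ p * ‖f ((r:ℂ) * Complex.exp ((θ:ℂ)*Complex.I))‖ ^ p := by
    intro θ
    rw [norm_smul, Real.norm_eq_abs, abs_of_nonneg ha, Real.mul_rpow ha (norm_nonneg _)]
  simp only [h1]
  rw [intervalIntegral.integral_const_mul, ← mul_assoc, mul_comm ((2*Real.pi)⁻¹) (a^p), mul_assoc,
    Real.mul_rpow (by positivity) (by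
      apply mul_nonneg (by positivity)
      apply intervalIntegral.integral_nonneg (by positivity)
      intro θ _; positivity),
    ← Real.rpow_mul ha, mul_one_div, div_self hp.ne', Real.rpow_one]

lemma hpNorm_smul (f : ℂ → X) {p a : ℝ} (hp : 0 < p) (ha : 0 ≤ a) :
    hpNorm p (fun z => a • f z) = a * hpNorm p f := by
  unfold hpNorm
  rw [Real.mul_iSup_of_nonneg ha]
  exact iSup_congr fun r => hpRadial_smul f hp ha r

lemma norm_add_smul_le_max (x y : X) {t : ℝ} (ht : |t| ≤ 1) :
    ‖x + t • y‖ ≤ max ‖x + y‖ ‖x - y‖ := by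
  have h : x + t • y = ((1+t)/2) • (x + y) + ((1-t)/2) • (x - y) := by
    rw [smul_add, smul_sub]; module
  rw [h]
  rw [abs_le] at ht
  calc ‖((1+t)/2) • (x + y) + ((1-t)/2) • (x - y)‖
      ≤ ‖((1+t)/2) • (x + y)‖ + ‖((1-t)/2) • (x - y)‖ := norm_add_le _ _
    _ = ((1+t)/2) * ‖x + y‖ + ((1-t)/2) * ‖x - y‖ := by
        rw [norm_smul, norm_smul, Real.norm_eq_abs, Real.norm_eq_abs,
          abs_of_nonneg (by linarith), abs_of_nonneg (by linarith)]
    _ ≤ ((1+t)/2) * max ‖x + y‖ ‖x - y‖ + ((1-t)/2) * max ‖x + y‖ ‖x - y‖ := by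
        gcongr
        · linarith
        · exact le_max_left _ _
        · linarith
        · exact le_max_right _ _
    _ = max ‖x + y‖ ‖x - y‖ := by ring_nf

lemma mean_le_hpRadial {f : ℂ → X} (hf : Continuous f) {p : ℝ} (hp : 1 ≤ p) (r : ℝ) :
    (2*Real.pi)⁻¹ * (∫ θ in (0:ℝ)..(2*Real.pi), ‖f ((r:ℂ) * Complex.exp ((θ:ℂ)*Complex.I))‖)
      ≤ hpRadial p f r := by
  have hp0 : (0:ℝ) < p := lt_of_lt_of_le one_pos hp
  have hpi : (0:ℝ) < 2*Real.pi := by positivity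
  set h : ℝ → ℝ := fun θ => ‖f ((r:ℂ) * Complex.exp ((θ:ℂ)*Complex.I))‖ with hh
  have hhc : Continuous h := (hf.comp (cont_circle r)).norm
  have hhp : Continuous (fun θ => h θ ^ p) :=
    hhc.rpow_const (fun _ => Or.inr hp0.le)
  set μ : Measure ℝ := volume.restrict (Set.Ioc (0:ℝ) (2*Real.pi)) with hμ
  haveI : NeZero μ := by
    constructor
    intro hc
    rw [hμ, Measure.restrict_eq_zero, Real.volume_Ioc] at hc
    simp at hc
    have := Real.pi_pos
    linarith
  have hfi : Integrable h μ := hhc.integrableOn_Ioc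
  have hgi : Integrable (fun θ => h θ ^ p) μ := hhp.integrableOn_Ioc
  have key := (convexOn_rpow hp).map_average_le
    (ContinuousOn.rpow_const continuousOn_id (fun x _ => Or.inr hp0.le))
    isClosed_Ici
    (Eventually.of_forall (fun θ => norm_nonneg _ : ∀ θ, h θ ∈ Set.Ici (0:ℝ)))
    hfi hgi
  have havg : ∀ (g : ℝ → ℝ), (⨍ x, g x ∂μ) = (2*Real.pi)⁻¹ * ∫ θ in (0:ℝ)..(2*Real.pi), g θ := by
    intro g
    have : (⨍ x in (0:ℝ)..(2*Real.pi), g x) = (2*Real.pi - 0)⁻¹ • ∫ x in (0:ℝ)..(2*Real.pi), g x :=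
      interval_average_eq g 0 (2*Real.pi)
    rw [Set.uIoc_of_le hpi.le] at this
    rw [hμ]
    rw [this, sub_zero, smul_eq_mul]
  rw [havg, havg] at key
  have hA : (0:ℝ) ≤ (2*Real.pi)⁻¹ * ∫ θ in (0:ℝ)..(2*Real.pi), h θ := by
    apply mul_nonneg (by positivity)
    apply intervalIntegral.integral_nonneg hpi.le
    intro θ _; exact norm_nonneg _
  calc (2*Real.pi)⁻¹ * ∫ θ in (0:ℝ)..(2*Real.pi), h θ
      = (((2*Real.pi)⁻¹ * ∫ θ in (0:ℝ)..(2*Real.pi), h θ) ^ p) ^ (1/p) :=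
        (rpow_rpow_inv hA hp0).symm
    _ ≤ hpRadial p f r := by
        apply Real.rpow_le_rpow (by positivity) key (by positivity)

lemma harmonic_f (x y : X) (m : ℕ) :
    HarmonicOnDisk (fun z : ℂ => x + (z^m).re • y) := by
  constructor
  · exact (continuous_const.add ((Complex.continuous_re.comp
      (continuous_pow m)).smul continuous_const)).continuousOn
  intro z _ ρ hρ _
  have hi1 : IntervalIntegrable (fun _ : ℝ => x) volume 0 (2*Real.pi) :=
    intervalIntegrable_const
  have hc2 : Continuous (fun θ : ℝ => (((z + (ρ:ℂ) * Complex.exp ((θ:ℂ)*Complex.I))^m).re) • y) := by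
    apply Continuous.smul _ continuous_const
    apply Complex.continuous_re.comp
    apply Continuous.pow
    exact continuous_const.add (continuous_const.mul
      ((Complex.continuous_ofReal.mul continuous_const).cexp))
  have hi2 : IntervalIntegrable
      (fun θ : ℝ => (((z + (ρ:ℂ) * Complex.exp ((θ:ℂ)*Complex.I))^m).re) • y)
      volume 0 (2*Real.pi) := hc2.intervalIntegrable 0 (2*Real.pi)
  rw [intervalIntegral.integral_add hi1 hi2, intervalIntegral.integral_const,
    intervalIntegral.integral_smul_const]
  have hre : (∫ θ in (0:ℝ)..(2*Real.pi), ((z + (ρ:ℂ) * Complex.exp ((θ:ℂ)*Complex.I))^m).re)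
      = (2*Real.pi) * (z^m).re := by
    have hci : IntervalIntegrable
        (fun θ : ℝ => (z + (ρ:ℂ) * Complex.exp ((θ:ℂ)*Complex.I))^m) volume 0 (2*Real.pi) := by
      apply Continuous.intervalIntegrable
      exact (continuous_const.add (continuous_const.mul
        ((Complex.continuous_ofReal.mul continuous_const).cexp))).pow m
    have := (Complex.reCLM).intervalIntegral_comp_comm hci
    simp only [Complex.reCLM_apply] at this
    rw [this, circle_mean_pow z hρ m]
    simp [Complex.ofReal_mul]
  rw [hre]
  rw [sub_zero, smul_add, smul_smul, smul_smul]
  simp only []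
  have hpi : (2*Real.pi) ≠ 0 := by positivity
  rw [inv_mul_cancel₀ hpi, ← mul_assoc, inv_mul_cancel₀ hpi, one_mul, one_smul]

lemma harmonic_const (x : X) : HarmonicOnDisk (fun _ : ℂ => x) := by
  constructor
  · exact continuous_const.continuousOn
  intro z _ ρ hρ _
  rw [intervalIntegral.integral_const, sub_zero, smul_smul,
    inv_mul_cancel₀ (by positivity : (2*Real.pi:ℝ) ≠ 0), one_smul]

end Aux

set_option maxHeartbeats 1000000 in
theorem stmt19 {X : Type*} [NormedAddCommGroup X] [NormedSpace ℝ X] [CompleteSpace X]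
    (p : ℝ) (hp : 1 < p)
    (hKK : ∀ (F : ℕ → ℂ → X) (f : ℂ → X),
      (∀ n, MemHp p (F n)) → MemHp p f →
      (∀ n, hpNorm p (F n) = 1) → hpNorm p f = 1 →
      (∀ K : Set ℂ, K ⊆ Metric.ball 0 1 → IsCompact K →
        TendstoUniformlyOn F f atTop K) →
      Tendsto (fun n => hpNorm p (fun z => F n z - f z)) atTop (𝓝 0)) :
    ∀ x : X, ‖x‖ = 1 → ∀ ε : ℝ, 0 < ε → ∃ δ : ℝ, 0 < δ ∧
      ∀ y : X, ε ≤ ‖y‖ → 1 + δ ≤ max ‖x + y‖ ‖x - y‖ := by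
  intro x hx ε hε
  by_contra hcon
  push_neg at hcon
  have hp0 : (0:ℝ) < p := lt_trans one_pos hp
  have hpi : (0:ℝ) < 2*Real.pi := by positivity
  choose y hy1 hy2 using fun n : ℕ => hcon (1/((n:ℝ)+1)) (by positivity)
  set M : ℕ → ℝ := fun n => max ‖x + y n‖ ‖x - y n‖ with hMdef
  have hM1 : ∀ n, 1 ≤ M n := by
    intro n
    have h2 : ‖x + x‖ ≤ ‖x + y n‖ + ‖x - y n‖ := by
      calc ‖x + x‖ = ‖(x + y n) + (x - y n)‖ := by rw [add_add_sub_cancel]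
        _ ≤ _ := norm_add_le _ _
    have h3 : ‖x + x‖ = 2 := by
      rw [← two_smul ℝ x, norm_smul]; simp [hx]
    have h4 := le_max_left ‖x + y n‖ ‖x - y n‖
    have h5 := le_max_right ‖x + y n‖ ‖x - y n‖
    simp only [hMdef]
    linarith
  have hM0 : ∀ n, (0:ℝ) ≤ M n := fun n => le_trans zero_le_one (hM1 n)
  have hMy : ∀ n, ‖y n‖ ≤ M n := by
    intro n
    have h2 : ‖y n + y n‖ ≤ ‖x + y n‖ + ‖x - y n‖ := by
      calc ‖y n + y n‖ = ‖(x + y n) - (x - y n)‖ := by rw [add_sub_sub_cancel]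
        _ ≤ _ := norm_sub_le _ _
    have h3 : ‖y n + y n‖ = 2 * ‖y n‖ := by
      rw [← two_smul ℝ (y n), norm_smul]; simp
    have h4 := le_max_left ‖x + y n‖ ‖x - y n‖
    have h5 := le_max_right ‖x + y n‖ ‖x - y n‖
    simp only [hMdef]
    linarith
  have hM2 : ∀ n, M n < 1 + 1/((n:ℝ)+1) := hy2
  have hM2' : ∀ n, M n ≤ 2 := by
    intro n
    have h1 : 1/((n:ℝ)+1) ≤ 1 := by
      rw [div_le_one (by positivity)]
      have hn0 : (0:ℝ) ≤ (n:ℝ) := Nat.cast_nonneg n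
      linarith
    linarith [hM2 n]
  set g : ℕ → ℂ → X := fun n z => x + ((z^(n+1)).re) • y n with hgdef
  have hgcont : ∀ n, Continuous (g n) := fun n =>
    continuous_const.add ((Complex.continuous_re.comp (continuous_pow (n+1))).smul continuous_const)
  have hgbd : ∀ n, ∀ r : ℝ, 0 ≤ r → r ≤ 1 → ∀ θ : ℝ,
      ‖g n ((r:ℂ) * Complex.exp ((θ:ℂ)*Complex.I))‖ ≤ M n := by
    intro n r hr0 hr1 θ
    simp only [hgdef]
    rw [re_pow_circle]
    apply norm_add_smul_le_max
    rw [abs_mul]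
    have h1 : |r^(n+1)| ≤ 1 := by
      rw [abs_of_nonneg (by positivity)]; exact pow_le_one₀ hr0 hr1
    have h2' : |Real.cos (((n+1:ℕ):ℝ)*θ)| ≤ 1 := Real.abs_cos_le_one _
    calc |r^(n+1)| * |Real.cos (((n+1:ℕ):ℝ)*θ)| ≤ 1 * 1 :=
          mul_le_mul h1 h2' (abs_nonneg _) zero_le_one
      _ = 1 := one_mul 1
  have hbddg : ∀ n, BddAbove (Set.range fun r : Set.Ico (0:ℝ) 1 => hpRadial p (g n) r) := by
    intro n
    refine ⟨M n, ?_⟩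
    rintro v ⟨r, rfl⟩
    exact hpRadial_le (hgcont n) r hp0 (hM0 n) (fun θ => hgbd n r r.2.1 r.2.2.le θ)
  have hmemg : ∀ n, MemHp p (g n) := fun n => ⟨harmonic_f x (y n) (n+1), hbddg n⟩
  set c : ℕ → ℝ := fun n => hpNorm p (g n) with hcdef
  have hc_le : ∀ n, c n ≤ M n := by
    intro n
    apply ciSup_le
    intro r
    exact hpRadial_le (hgcont n) r hp0 (hM0 n) (fun θ => hgbd n r r.2.1 r.2.2.le θ)
  have hc_ge : ∀ n, 1 ≤ c n := by
    intro n
    have h0 : hpRadial p (g n) 0 = 1 := by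
      rw [hpRadial_zero (g n) hp0]
      simp only [hgdef]
      rw [zero_pow (Nat.succ_ne_zero n)]
      simp [hx]
    have hle := le_ciSup (hbddg n) (⟨0, by norm_num⟩ : Set.Ico (0:ℝ) 1)
    exact le_trans (le_of_eq h0.symm) hle
  have hc_pos : ∀ n, 0 < c n := fun n => lt_of_lt_of_le one_pos (hc_ge n)
  have hcinv1 : ∀ n, (c n)⁻¹ ≤ 1 := by
    intro n
    rw [inv_le_one_iff₀]
    right; exact hc_ge n
  have hcinv0 : ∀ n, (0:ℝ) ≤ (c n)⁻¹ := fun n => (inv_pos.mpr (hc_pos n)).le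
  set F : ℕ → ℂ → X := fun n z => (c n)⁻¹ • g n z with hFdef
  have hFcont : ∀ n, Continuous (F n) := fun n => continuous_const.smul (hgcont n)
  have hFbd : ∀ n, ∀ r : ℝ, 0 ≤ r → r ≤ 1 → ∀ θ : ℝ,
      ‖F n ((r:ℂ) * Complex.exp ((θ:ℂ)*Complex.I))‖ ≤ M n := by
    intro n r hr0 hr1 θ
    simp only [hFdef]
    rw [norm_smul, Real.norm_eq_abs, abs_of_nonneg (hcinv0 n)]
    calc (c n)⁻¹ * ‖g n ((r:ℂ) * Complex.exp ((θ:ℂ)*Complex.I))‖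
        ≤ 1 * M n := mul_le_mul (hcinv1 n) (hgbd n r hr0 hr1 θ) (norm_nonneg _) zero_le_one
      _ = M n := one_mul _
  have hmemF : ∀ n, MemHp p (F n) := by
    intro n
    refine ⟨⟨(hFcont n).continuousOn, ?_⟩, ?_⟩
    · intro z hz ρ hρ hsub
      have hmv := (hmemg n).1.2 z hz ρ hρ hsub
      simp only [hFdef]
      rw [intervalIntegral.integral_smul, smul_comm ((2*Real.pi)⁻¹) ((c n)⁻¹), ← hmv]
    · refine ⟨M n, ?_⟩
      rintro v ⟨r, rfl⟩
      exact hpRadial_le (hFcont n) r hp0 (hM0 n) (fun θ => hFbd n r r.2.1 r.2.2.le θ)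
  have hFnorm : ∀ n, hpNorm p (F n) = 1 := by
    intro n
    have h1 : hpNorm p (F n) = (c n)⁻¹ * c n := by
      simp only [hFdef]
      exact hpNorm_smul (g n) hp0 (hcinv0 n)
    rw [h1, inv_mul_cancel₀ (hc_pos n).ne']
  have hmemf : MemHp p (fun _ : ℂ => x) := by
    refine ⟨harmonic_const x, ⟨1, ?_⟩⟩
    rintro v ⟨r, rfl⟩
    show hpRadial p (fun _ : ℂ => x) (r:ℝ) ≤ 1
    rw [hpRadial_const x hp0, hx]
  have hfnorm : hpNorm p (fun _ : ℂ => x) = 1 := by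
    unfold hpNorm
    simp only [hpRadial_const x hp0, hx, ciSup_const]
  have hunif : ∀ K : Set ℂ, K ⊆ Metric.ball 0 1 → IsCompact K →
      TendstoUniformlyOn F (fun _ => x) atTop K := by
    intro K hK hKc
    rcases K.eq_empty_or_nonempty with rfl | hne
    · intro u hu
      simp
    obtain ⟨z₀, hz₀K, hz₀max⟩ := hKc.exists_isMaxOn hne continuous_norm.continuousOn
    have hρ1 : ‖z₀‖ < 1 := mem_ball_zero_iff.mp (hK hz₀K)
    have hρ0 : (0:ℝ) ≤ ‖z₀‖ := norm_nonneg _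
    rw [Metric.tendstoUniformlyOn_iff]
    intro ε' hε'
    have hB : Tendsto (fun n : ℕ => 1/((n:ℝ)+1) + ‖z₀‖^(n+1) * 2) atTop (𝓝 0) := by
      have h1 := tendsto_one_div_add_atTop_nhds_zero_nat (𝕜 := ℝ)
      have h2 : Tendsto (fun n : ℕ => ‖z₀‖^(n+1)) atTop (𝓝 0) :=
        (tendsto_pow_atTop_nhds_zero_of_lt_one hρ0 hρ1).comp (tendsto_add_atTop_nat 1)
      have h3 := h1.add (h2.mul_const 2)
      simpa using h3
    filter_upwards [hB.eventually_lt_const hε'] with n hn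
    intro z hzK
    rw [dist_eq_norm]
    have hz1 : ‖z‖ ≤ ‖z₀‖ := hz₀max hzK
    have heq : x - F n z = (1 - (c n)⁻¹) • x - ((c n)⁻¹ * ((z^(n+1)).re)) • y n := by
      simp only [hFdef, hgdef]
      rw [smul_add, smul_smul]
      module
    rw [heq]
    have hb1 : ‖(1 - (c n)⁻¹) • x‖ ≤ 1/((n:ℝ)+1) := by
      rw [norm_smul, Real.norm_eq_abs, hx, mul_one, abs_of_nonneg (by linarith [hcinv1 n])]
      have hcn : c n < 1 + 1/((n:ℝ)+1) := lt_of_le_of_lt (hc_le n) (hM2 n)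
      have hcp := hc_pos n
      have hge := hc_ge n
      have heq2 : 1 - (c n)⁻¹ = (c n - 1) / c n := by field_simp
      rw [heq2, div_le_iff₀ hcp]
      nlinarith
    have hb2 : ‖((c n)⁻¹ * ((z^(n+1)).re)) • y n‖ ≤ ‖z₀‖^(n+1) * 2 := by
      rw [norm_smul, Real.norm_eq_abs, abs_mul, abs_of_nonneg (hcinv0 n)]
      have hre : |(z^(n+1)).re| ≤ ‖z₀‖^(n+1) := by
        calc |(z^(n+1)).re| ≤ ‖z^(n+1)‖ := Complex.abs_re_le_norm _
          _ = ‖z‖^(n+1) := norm_pow _ _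
          _ ≤ ‖z₀‖^(n+1) := pow_le_pow_left₀ (norm_nonneg z) hz1 _
      have hy2' : ‖y n‖ ≤ 2 := le_trans (hMy n) (hM2' n)
      calc (c n)⁻¹ * |(z^(n+1)).re| * ‖y n‖ ≤ 1 * (‖z₀‖^(n+1)) * 2 := by
            apply mul_le_mul _ hy2' (norm_nonneg _) (by positivity)
            exact mul_le_mul (hcinv1 n) hre (abs_nonneg _) zero_le_one
        _ = ‖z₀‖^(n+1) * 2 := by ring
    calc ‖(1 - (c n)⁻¹) • x - ((c n)⁻¹ * ((z^(n+1)).re)) • y n‖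
        ≤ ‖(1 - (c n)⁻¹) • x‖ + ‖((c n)⁻¹ * ((z^(n+1)).re)) • y n‖ := norm_sub_le _ _
      _ ≤ 1/((n:ℝ)+1) + ‖z₀‖^(n+1) * 2 := add_le_add hb1 hb2
      _ < ε' := hn
  have htend := hKK F (fun _ => x) hmemF hmemf hFnorm hfnorm hunif
  set t : ℕ → ℝ := fun n => (1 + 1/((n:ℝ)+1))⁻¹ with htdef
  have ht0 : ∀ n, (0:ℝ) ≤ t n := by
    intro n; simp only [htdef]; positivity
  have hct : ∀ n, t n ≤ (c n)⁻¹ := by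
    intro n
    simp only [htdef]
    apply inv_anti₀ (hc_pos n)
    exact le_trans (hc_le n) (hM2 n).le
  have hDbd : ∀ n, BddAbove (Set.range fun r : Set.Ico (0:ℝ) 1 =>
      hpRadial p (fun z => F n z - x) r) := by
    intro n
    refine ⟨M n + 1, ?_⟩
    rintro v ⟨r, rfl⟩
    apply hpRadial_le ((hFcont n).sub continuous_const) r hp0 (by linarith [hM0 n])
    intro θ
    calc ‖F n ((r:ℝ) * Complex.exp ((θ:ℂ)*Complex.I)) - x‖
        ≤ ‖F n ((r:ℝ) * Complex.exp ((θ:ℂ)*Complex.I))‖ + ‖x‖ := norm_sub_le _ _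
      _ ≤ M n + 1 := add_le_add (hFbd n r r.2.1 r.2.2.le θ) (le_of_eq hx)
  have hlow : ∀ n, t n * (ε/4 + 1) - 1 ≤ hpNorm p (fun z => F n z - x) := by
    intro n
    set r : ℝ := (1/2 : ℝ) ^ (((n:ℝ)+1))⁻¹ with hrdef
    have hr0 : (0:ℝ) ≤ r := Real.rpow_nonneg (by norm_num) _
    have hr1 : r < 1 := Real.rpow_lt_one (by norm_num) (by norm_num) (by positivity)
    have hrpow : r^(n+1) = 1/2 := by
      rw [hrdef, ← Real.rpow_natCast ((1/2 : ℝ) ^ (((n:ℝ)+1))⁻¹) (n+1),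
        ← Real.rpow_mul (by norm_num)]
      push_cast
      rw [inv_mul_cancel₀ (by positivity : ((n:ℝ)+1) ≠ 0), Real.rpow_one]
    set a : ℝ := (c n)⁻¹ * (1/2) * ‖y n‖ with hadef
    set b : ℝ := 1 - (c n)⁻¹ with hbdef
    have ha0 : 0 ≤ a := by
      simp only [hadef]
      exact mul_nonneg (mul_nonneg (hcinv0 n) (by norm_num)) (norm_nonneg _)
    have hb0 : 0 ≤ b := by simp only [hbdef]; linarith [hcinv1 n]
    have hpt : ∀ θ : ℝ, a * Real.cos (((n+1:ℕ):ℝ)*θ)^2 - b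
        ≤ ‖F n ((r:ℂ)*Complex.exp ((θ:ℂ)*Complex.I)) - x‖ := by
      intro θ
      set w : ℂ := (r:ℂ)*Complex.exp ((θ:ℂ)*Complex.I) with hwdef
      have heq : F n w - x = ((c n)⁻¹ * ((w^(n+1)).re)) • y n + ((c n)⁻¹ - 1) • x := by
        simp only [hFdef, hgdef]
        rw [smul_add, smul_smul]
        module
      rw [heq]
      have h2 : ‖((c n)⁻¹ - 1) • x‖ = b := by
        rw [norm_smul, Real.norm_eq_abs, hx, mul_one, abs_of_nonpos (by linarith [hcinv1 n]),
          hbdef]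
        ring
      have h3 : ‖((c n)⁻¹ * ((w^(n+1)).re)) • y n‖
          = (c n)⁻¹ * ((1/2) * |Real.cos (((n+1:ℕ):ℝ)*θ)|) * ‖y n‖ := by
        rw [norm_smul, Real.norm_eq_abs, abs_mul, abs_of_nonneg (hcinv0 n)]
        congr 2
        rw [hwdef, re_pow_circle, hrpow, abs_mul, abs_of_nonneg (by norm_num : (0:ℝ) ≤ 1/2)]
      have h1 : ‖((c n)⁻¹ * ((w^(n+1)).re)) • y n‖
          ≤ ‖((c n)⁻¹ * ((w^(n+1)).re)) • y n + ((c n)⁻¹ - 1) • x‖ + ‖((c n)⁻¹ - 1) • x‖ :=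
        norm_le_add_norm_add _ _
      have h4 : a * Real.cos (((n+1:ℕ):ℝ)*θ)^2
          ≤ (c n)⁻¹ * ((1/2) * |Real.cos (((n+1:ℕ):ℝ)*θ)|) * ‖y n‖ := by
        have hC : Real.cos (((n+1:ℕ):ℝ)*θ)^2 ≤ |Real.cos (((n+1:ℕ):ℝ)*θ)| := by
          nlinarith [abs_nonneg (Real.cos (((n+1:ℕ):ℝ)*θ)),
            Real.abs_cos_le_one (((n+1:ℕ):ℝ)*θ), sq_abs (Real.cos (((n+1:ℕ):ℝ)*θ))]
        simp only [hadef]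
        nlinarith [norm_nonneg (y n), hcinv0 n, sq_nonneg (Real.cos (((n+1:ℕ):ℝ)*θ))]
      rw [h2] at h1
      rw [h3] at h1
      linarith
    have hDcont : Continuous (fun z => F n z - x) := (hFcont n).sub continuous_const
    have hrad := mean_le_hpRadial hDcont hp.le r
    have hint : (∫ θ in (0:ℝ)..(2*Real.pi), (a * Real.cos (((n+1:ℕ):ℝ)*θ)^2 - b))
        ≤ ∫ θ in (0:ℝ)..(2*Real.pi), ‖F n ((r:ℂ)*Complex.exp ((θ:ℂ)*Complex.I)) - x‖ := by
      apply intervalIntegral.integral_mono_on hpi.le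
      · apply Continuous.intervalIntegrable
        apply Continuous.sub _ continuous_const
        apply Continuous.mul continuous_const
        exact ((Real.continuous_cos.comp (continuous_const.mul continuous_id)).pow 2)
      · exact ((hDcont.comp (cont_circle r)).norm).intervalIntegrable _ _
      · intro θ _
        exact hpt θ
    have hval : (∫ θ in (0:ℝ)..(2*Real.pi), (a * Real.cos (((n+1:ℕ):ℝ)*θ)^2 - b))
        = a * Real.pi - b*(2*Real.pi) := by
      rw [intervalIntegral.integral_sub _ intervalIntegrable_const]
      · rw [intervalIntegral.integral_const_mul, integral_cos_sq_mul (Nat.le_add_left 1 n),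
          intervalIntegral.integral_const]
        simp
        ring
      · apply Continuous.intervalIntegrable
        apply Continuous.mul continuous_const
        exact ((Real.continuous_cos.comp (continuous_const.mul continuous_id)).pow 2)
    have hchain : a/2 - b ≤ hpNorm p (fun z => F n z - x) := by
      have h6 := le_ciSup (hDbd n) (⟨r, hr0, hr1⟩ : Set.Ico (0:ℝ) 1)
      have h7 : (2*Real.pi)⁻¹ * (a * Real.pi - b*(2*Real.pi)) = a/2 - b := by
        field_simp
      calc a/2 - b = (2*Real.pi)⁻¹ * (a * Real.pi - b*(2*Real.pi)) := h7.symm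
        _ ≤ (2*Real.pi)⁻¹ *
            ∫ θ in (0:ℝ)..(2*Real.pi), ‖F n ((r:ℂ)*Complex.exp ((θ:ℂ)*Complex.I)) - x‖ := by
            apply mul_le_mul_of_nonneg_left _ (by positivity)
            rw [← hval]
            exact hint
        _ ≤ hpRadial p (fun z => F n z - x) r := hrad
        _ ≤ hpNorm p (fun z => F n z - x) := h6
    have hfin : t n * (ε/4 + 1) - 1 ≤ a/2 - b := by
      simp only [hadef, hbdef]
      have hmul : t n * ε ≤ (c n)⁻¹ * ‖y n‖ :=
        mul_le_mul (hct n) (hy1 n) hε.le (hcinv0 n)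
      nlinarith [hct n, ht0 n, hcinv0 n]
    linarith
  have hLtend : Tendsto (fun n => t n * (ε/4+1) - 1) atTop (𝓝 (ε/4)) := by
    have h1 : Tendsto t atTop (𝓝 1) := by
      have h2 := tendsto_one_div_add_atTop_nhds_zero_nat (𝕜 := ℝ)
      have h3 : Tendsto (fun n : ℕ => 1 + 1/((n:ℝ)+1)) atTop (𝓝 1) := by
        have h3' : Tendsto (fun n : ℕ => (1:ℝ) + 1/((n:ℝ)+1)) atTop (𝓝 ((1:ℝ) + 0)) :=
          Tendsto.add tendsto_const_nhds h2
        simpa using h3'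
      have h4 := h3.inv₀ (by norm_num)
      simpa [htdef] using h4
    have h5 := (h1.mul_const (ε/4+1)).sub_const 1
    have h6 : 1 * (ε/4+1) - 1 = ε/4 := by ring
    rw [h6] at h5
    exact h5
  have hev1 := htend.eventually_lt_const (show (0:ℝ) < ε/8 by positivity)
  have hev2 := hLtend.eventually_const_lt (show ε/8 < ε/4 by linarith)
  obtain ⟨n, hn1, hn2⟩ := (hev1.and hev2).exists
  have hn1' : hpNorm p (fun z => F n z - x) < ε/8 := hn1
  linarith [hlow n]
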